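/- Let p be a prime, Q a finite group, P a Sylow p-subgroup of Q, t = [Q : P] the index of P, and d ≥ 1. Suppose that for each d' with ⌈d/t⌉ ≤ d' ≤ d there is a finite family of at most n_{d'} indecomposable d'-dimensional 𝔽_p-linear representations of P such that every indecomposable d'-dimensional 𝔽_p-linear representation of P is isomorphic to a member of the family. Then there is a finite family of at most t · (Σ_{d'=⌈d/t⌉}^{d} n_{d'}) indecomposable d-dimensional 𝔽_p-linear representations of Q such that every indecomposable d-dimensional 𝔽_p-linear representation of Q is isomorphic to a member of the family. -/

import Mathlib

open CategoryTheory Module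
set_option linter.unusedSectionVars false


/-- A representation `M` of `G` over `k` is *indecomposable* if it is nonzero and whenever
`M` is the internal direct sum of two subrepresentations, one of them is zero. -/
def Rep.Indecomposable {k : Type} [Field k] {G : Type} [Group G] (M : Rep.{0} k G) : Prop :=
  Nontrivial M.V ∧ ∀ U V : Submodule k M.V,
    (∀ g : G, ∀ x ∈ U, M.ρ g x ∈ U) → (∀ g : G, ∀ x ∈ V, M.ρ g x ∈ V) →
    U ⊓ V = ⊥ → U ⊔ V = ⊤ → U = ⊥ ∨ V = ⊥

/-- `CoversIndec k G d N` means: there is a family of (at most) `N` representations of `G`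
over `k` such that every indecomposable `d`-dimensional representation of `G` over `k` is
isomorphic to a member of the family. -/
def CoversIndec (k : Type) [Field k] (G : Type) [Group G] (d N : ℕ) : Prop :=
  ∃ f : Fin N → Rep.{0} k G, ∀ M : Rep.{0} k G, FiniteDimensional k M.V →
    M.Indecomposable → Module.finrank k M.V = d → ∃ i, Nonempty (M ≅ f i)

namespace RepAux

variable {k : Type} [Field k] {G : Type} [Group G]

@[simp] lemma comp_apply' {M N K : Rep.{0} k G} (f : M ⟶ N) (g : N ⟶ K) (x : M.V) :
    (f ≫ g).hom x = g.hom (f.hom x) := rfl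

@[simp] lemma id_apply' (M : Rep.{0} k G) (x : M.V) : (𝟙 M : M ⟶ M).hom x = x := rfl

/-- A morphism of representations from an equivariant linear map. -/
noncomputable def mkHom {M N : Rep.{0} k G} (f : M.V →ₗ[k] N.V)
    (h : ∀ g, f ∘ₗ M.ρ g = N.ρ g ∘ₗ f) : M ⟶ N :=
  ConcreteCategory.ofHom (C := Rep.{0} k G) (X := M) (Y := N) ⟨f, h⟩

lemma hom_ext' {M N : Rep.{0} k G} {f g : M ⟶ N} (h : ∀ x, f.hom x = g.hom x) : f = g :=
  Rep.hom_ext (Representation.IntertwiningMap.ext (LinearMap.ext h))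

/-- Iso of representations from a hom with bijective underlying map. -/
noncomputable def isoOfBijective {M N : Rep.{0} k G} (f : M ⟶ N) (hf : Function.Bijective f.hom) :
    M ≅ N :=
  Rep.mkIso (Representation.IntertwiningMap.ofBijective f.hom hf)

@[simp] lemma isoOfBijective_hom_hom {M N : Rep.{0} k G} (f : M ⟶ N) (hf) :
    (isoOfBijective f hf).hom.hom = f.hom := rfl

/-- `M` is a direct summand of `N`. -/
def Summand (M N : Rep.{0} k G) : Prop :=
  ∃ (i : M ⟶ N) (r : N ⟶ M), i ≫ r = 𝟙 M

lemma Summand.of_iso_right {M N N' : Rep.{0} k G} (h : Summand M N) (e : N ≅ N') : Summand M N' := by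
  obtain ⟨i, r, hir⟩ := h
  exact ⟨i ≫ e.hom, e.inv ≫ r, by simp [hir]⟩

lemma Summand.of_iso_left {M M' N : Rep.{0} k G} (h : Summand M N) (e : M ≅ M') : Summand M' N := by
  obtain ⟨i, r, hir⟩ := h
  refine ⟨e.inv ≫ i, r ≫ e.hom, ?_⟩
  rw [Category.assoc, ← Category.assoc i, hir, Category.id_comp, e.inv_hom_id]

lemma Summand.finrank_le {M N : Rep.{0} k G} [FiniteDimensional k N.V] (h : Summand M N) :
    finrank k M.V ≤ finrank k N.V := by
  obtain ⟨i, r, hir⟩ := h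
  have key : ∀ x, r.hom (i.hom x) = x := by
    intro x
    have : (i ≫ r).hom x = x := by rw [hir]; rfl
    simpa using this
  have hinj : Function.Injective i.hom := fun x y hxy => by
    rw [← key x, hxy, key y]
  exact LinearMap.finrank_le_finrank_of_injective hinj

variable {ι : Type} [Fintype ι] [DecidableEq ι]

/-- The direct sum (as pi type) of a finite family of representations. -/
noncomputable def piRep (σ : ι → Rep.{0} k G) : Rep.{0} k G :=
  Rep.of (X := ∀ j, (σ j).V)
    { toFun := fun g => LinearMap.pi (fun j => ((σ j).ρ g) ∘ₗ LinearMap.proj j)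
      map_one' := by
        refine LinearMap.ext fun v => funext fun j => ?_
        show (σ j).ρ 1 (v j) = v j
        simp
      map_mul' := by
        intro g h
        refine LinearMap.ext fun v => funext fun j => ?_
        show (σ j).ρ (g * h) (v j) = (σ j).ρ g ((σ j).ρ h (v j))
        rw [map_mul]
        rfl }

@[simp] lemma piRep_ρ_apply (σ : ι → Rep.{0} k G) (g : G) (v : (∀ j, ((σ j).V : Type))) (j : ι) :
    ((piRep σ).ρ g) v j = (σ j).ρ g (v j) := rfl

/-- Inclusion of a factor into the direct sum. -/
noncomputable def piIncl (σ : ι → Rep.{0} k G) (j : ι) : σ j ⟶ piRep σ :=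
  mkHom (LinearMap.single k (fun j => (σ j).V) j) (by
    intro g
    refine LinearMap.ext fun x => funext fun m => ?_
    show (Pi.single j ((σ j).ρ g x) : ∀ i, (σ i).V) m =
      (σ m).ρ g ((Pi.single j x : ∀ i, (σ i).V) m)
    by_cases h : m = j
    · subst h; simp
    · simp [Pi.single_eq_of_ne h])

/-- Projection from the direct sum onto a factor. -/
noncomputable def piProj (σ : ι → Rep.{0} k G) (j : ι) : piRep σ ⟶ σ j :=
  mkHom (LinearMap.proj j) (fun _ => rfl)

lemma piIncl_comp_piProj (σ : ι → Rep.{0} k G) (j : ι) :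
    piIncl σ j ≫ piProj σ j = 𝟙 (σ j) := by
  refine hom_ext' fun x => ?_
  show (Pi.single j x : ∀ i, (σ i).V) j = x
  simp

lemma summand_piRep (σ : ι → Rep.{0} k G) (j : ι) : Summand (σ j) (piRep σ) :=
  ⟨piIncl σ j, piProj σ j, piIncl_comp_piProj σ j⟩

lemma sum_piProj_piIncl (σ : ι → Rep.{0} k G) :
    ∑ j, piProj σ j ≫ piIncl σ j = 𝟙 (piRep σ) := by
  refine hom_ext' fun (v : ∀ j, (σ j).V) => funext fun m => ?_
  have : ((∑ j : ι, piProj σ j ≫ piIncl σ j).hom v) m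
      = ∑ j : ι, (Pi.single j (v j) : ∀ i, (σ i).V) m := by
    rw [Rep.sum_hom]
    refine (congrFun (Representation.IntertwiningMap.sum_apply (s := Finset.univ)
      (f := fun j => (piProj σ j ≫ piIncl σ j).hom) (v := v)) m).trans ?_
    show (∑ j : ι, ((piProj σ j ≫ piIncl σ j).hom v : ∀ i, (σ i).V)) m = _
    exact (Finset.sum_apply m Finset.univ
      (fun j => ((piProj σ j ≫ piIncl σ j).hom v : ∀ i, (σ i).V))).trans rfl
  rw [this]
  show _ = v m
  simp [Pi.single_apply]

instance piRep_fd (σ : ι → Rep.{0} k G) [∀ j, FiniteDimensional k (σ j).V] :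
    FiniteDimensional k (piRep σ).V := by
  show FiniteDimensional k (∀ j, (σ j).V)
  infer_instance

lemma finrank_piRep (σ : ι → Rep.{0} k G) [∀ j, FiniteDimensional k (σ j).V] :
    finrank k (piRep σ).V = ∑ j, finrank k (σ j).V := by
  show finrank k (∀ j, ((σ j).V : Type)) = _
  rw [Module.finrank_pi_fintype]

section Fitting

variable {k : Type} [Field k] {G : Type} [Group G]

/-- The underlying linear endomorphism of an equivariant endomorphism. -/
def homEnd {M : Rep.{0} k G} (φ : M ⟶ M) : Module.End k M.V := φ.hom

lemma homEnd_apply {M : Rep.{0} k G} (φ : M ⟶ M) (x : M.V) : homEnd φ x = φ.hom x := rfl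

lemma hom_comm {M N : Rep.{0} k G} (f : M ⟶ N) (g : G) (x : M.V) :
    f.hom (M.ρ g x) = N.ρ g (f.hom x) :=
  Rep.hom_comm_apply f g x

lemma pow_comm_apply {M : Rep.{0} k G} (φ : M ⟶ M) (m : ℕ) (g : G) (x : M.V) :
    (homEnd φ ^ m) (M.ρ g x) = M.ρ g ((homEnd φ ^ m) x) := by
  induction m with
  | zero => simp
  | succ n ih =>
      have h1 : ∀ y : M.V, (homEnd φ ^ (n + 1)) y = φ.hom ((homEnd φ ^ n) y) := by
        intro y; rw [pow_succ']; rfl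
      rw [h1, h1, ih, hom_comm]

lemma inv_of_homInv {M N : Rep.{0} k G} (e : M ≅ N) :
    (∀ x, e.inv.hom (e.hom.hom x) = x) ∧ (∀ x, e.hom.hom (e.inv.hom x) = x) := by
  constructor
  · intro x
    have : (e.hom ≫ e.inv).hom x = x := by rw [e.hom_inv_id]; rfl
    exact this
  · intro x
    have : (e.inv ≫ e.hom).hom x = x := by rw [e.inv_hom_id]; rfl
    exact this

lemma iso_hom_bijective {M N : Rep.{0} k G} (e : M ≅ N) : Function.Bijective e.hom.hom :=
  Function.bijective_iff_has_inverse.mpr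
    ⟨e.inv.hom, (inv_of_homInv e).1, (inv_of_homInv e).2⟩

lemma iso_inv_bijective {M N : Rep.{0} k G} (e : M ≅ N) : Function.Bijective e.inv.hom :=
  Function.bijective_iff_has_inverse.mpr
    ⟨e.hom.hom, (inv_of_homInv e).2, (inv_of_homInv e).1⟩

/-- Fitting's lemma for representations: an equivariant endomorphism of a finite-dimensional
indecomposable representation is either bijective or nilpotent. -/
lemma fitting {M : Rep.{0} k G} [FiniteDimensional k M.V] (hM : M.Indecomposable) (φ : M ⟶ M) :
    Function.Bijective φ.hom ∨ IsNilpotent (homEnd φ) := by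
  obtain ⟨m, hm, hm1⟩ :=
    ((LinearMap.eventually_isCompl_ker_pow_range_pow
      (homEnd φ : M.V →ₗ[k] M.V)).and (Filter.eventually_ge_atTop 1)).exists
  have hker : ∀ g : G, ∀ x ∈ LinearMap.ker (homEnd φ ^ m),
      M.ρ g x ∈ LinearMap.ker (homEnd φ ^ m) := by
    intro g x hx
    rw [LinearMap.mem_ker] at hx ⊢
    have h2 := pow_comm_apply φ m g x
    rw [hx, map_zero] at h2
    exact h2
  have hrange : ∀ g : G, ∀ x ∈ LinearMap.range (homEnd φ ^ m),
      M.ρ g x ∈ LinearMap.range (homEnd φ ^ m) := by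
    rintro g x ⟨y, rfl⟩
    exact ⟨M.ρ g y, pow_comm_apply φ m g y⟩
  rcases hM.2 _ _ hker hrange (hm.inf_eq_bot) (hm.sup_eq_top) with h | h
  · left
    obtain ⟨m', rfl⟩ := Nat.exists_eq_add_of_le hm1
    have hbij : Function.Bijective (homEnd φ ^ (1 + m')) := by
      constructor
      · rw [← LinearMap.ker_eq_bot]; exact h
      · rw [← LinearMap.range_eq_top]
        have := hm.sup_eq_top
        rw [h] at this
        simpa using this
    have h1 : ∀ x, (homEnd φ ^ (1 + m')) x = φ.hom ((homEnd φ ^ m') x) := by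
      intro x; rw [pow_add, pow_one]; rfl
    have h2 : ∀ x, (homEnd φ ^ (1 + m')) x = (homEnd φ ^ m') (φ.hom x) := by
      intro x; rw [add_comm, pow_succ]; rfl
    constructor
    · intro x y hxy
      apply hbij.1
      rw [h2, h2]
      show (homEnd φ ^ m') (φ.hom x) = (homEnd φ ^ m') (φ.hom y)
      rw [hxy]
    · intro x
      obtain ⟨y, hy⟩ := hbij.2 x
      exact ⟨(homEnd φ ^ m') y, by rw [← hy, h1]⟩
  · right
    exact ⟨m, LinearMap.range_eq_bot.mp h⟩

lemma bij_of_add_eq_id {M : Rep.{0} k G} [FiniteDimensional k M.V] (hM : M.Indecomposable)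
    (a b : M ⟶ M) (h : a + b = 𝟙 M) :
    Function.Bijective a.hom ∨ Function.Bijective b.hom := by
  rcases fitting hM a with ha | ha
  · exact Or.inl ha
  · right
    have hb : homEnd b = 1 - homEnd a := by
      have h' := congrArg homEnd h
      have hadd : homEnd (a + b) = homEnd a + homEnd b := by
        show ((a + b).hom : Module.End k M.V) = _
        rw [Rep.add_hom]; rfl
      have hone : homEnd (𝟙 M) = 1 := rfl
      rw [hadd, hone] at h'
      rw [← h']; abel
    have : IsUnit (homEnd b) := by
      rw [hb]; exact ha.isUnit_one_sub
    exact (Module.End.isUnit_iff _).mp this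

lemma exists_bij_of_sum {M : Rep.{0} k G} [FiniteDimensional k M.V] (hM : M.Indecomposable)
    {ι : Type} [DecidableEq ι] (s : Finset ι) (f : ι → (M ⟶ M)) (c : M ⟶ M)
    (hc : Function.Bijective c.hom) (hsum : ∑ j ∈ s, f j = c) :
    ∃ j ∈ s, Function.Bijective (f j).hom := by
  induction s using Finset.induction_on generalizing f c with
  | empty =>
      exfalso
      haveI := hM.1
      obtain ⟨x, hx⟩ := exists_ne (0 : M.V)
      obtain ⟨y, hy⟩ := hc.2 x
      rw [Finset.sum_empty] at hsum
      subst hsum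
      exact hx (by simpa using hy.symm)
  | @insert a s ha ih =>
      rw [Finset.sum_insert ha] at hsum
      set e := isoOfBijective c hc with he
      have hch : c = e.hom := by apply Rep.hom_ext; rfl
      have key : (f a ≫ e.inv) + (∑ j ∈ s, f j) ≫ e.inv = 𝟙 M := by
        rw [← Preadditive.add_comp, hsum, hch, e.hom_inv_id]
      have hcomp : ∀ (u : M ⟶ M), Function.Bijective (u ≫ e.inv).hom →
          Function.Bijective u.hom := by
        intro u hu
        have heq : ⇑u.hom = ⇑e.hom.hom ∘ ⇑(u ≫ e.inv).hom := by
          refine funext fun x => ?_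
          show u.hom x = e.hom.hom (e.inv.hom (u.hom x))
          rw [(inv_of_homInv e).2]
        rw [heq]
        exact (iso_hom_bijective e).comp hu
      rcases bij_of_add_eq_id hM _ _ key with hbij | hbij
      · exact ⟨a, Finset.mem_insert_self a s, hcomp _ hbij⟩
      · have hsum' : ∑ j ∈ s, (f j ≫ e.inv) = (∑ j ∈ s, f j) ≫ e.inv := by
          rw [Preadditive.sum_comp]
        obtain ⟨j, hj, hbj⟩ := ih (fun j => f j ≫ e.inv) ((∑ j ∈ s, f j) ≫ e.inv) hbij hsum'
        exact ⟨j, Finset.mem_insert_of_mem hj, hcomp _ hbj⟩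

/-- Exchange lemma: an indecomposable summand of a finite direct sum is a summand of
one of the factors. -/
lemma exchange {M : Rep.{0} k G} [FiniteDimensional k M.V] (hM : M.Indecomposable)
    {ι : Type} [Fintype ι] [DecidableEq ι] (σ : ι → Rep.{0} k G)
    (h : Summand M (piRep σ)) : ∃ j, Summand M (σ j) := by
  obtain ⟨i, r, hir⟩ := h
  have hsum : ∑ j : ι, i ≫ (piProj σ j ≫ piIncl σ j) ≫ r = 𝟙 M := by
    have : ∑ j : ι, i ≫ (piProj σ j ≫ piIncl σ j) ≫ r
        = i ≫ (∑ j : ι, piProj σ j ≫ piIncl σ j) ≫ r := by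
      rw [Preadditive.sum_comp, Preadditive.comp_sum]
    rw [this, sum_piProj_piIncl, Category.id_comp, hir]
  obtain ⟨j, _, hbj⟩ := exists_bij_of_sum hM Finset.univ _ (𝟙 M)
    (Function.bijective_id) hsum
  set sj := i ≫ (piProj σ j ≫ piIncl σ j) ≫ r with hsj
  set e := isoOfBijective sj hbj with he
  refine ⟨j, i ≫ piProj σ j, piIncl σ j ≫ r ≫ e.inv, ?_⟩
  have h2 : (i ≫ piProj σ j) ≫ piIncl σ j ≫ r ≫ e.inv = sj ≫ e.inv := by
    simp [hsj]
  rw [h2]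
  have h3 : sj = e.hom := by apply Rep.hom_ext; rfl
  rw [h3, e.hom_inv_id]

/-- A nonzero summand of an indecomposable representation is isomorphic to it. -/
lemma iso_of_summand {M N : Rep.{0} k G} (hN : N.Indecomposable) (hM : Nontrivial M.V)
    (h : Summand M N) : Nonempty (M ≅ N) := by
  obtain ⟨i, r, hir⟩ := h
  have hri : ∀ x, r.hom (i.hom x) = x := by
    intro x
    have : (i ≫ r).hom x = x := by rw [hir]; rfl
    exact this
  set e : N ⟶ N := r ≫ i with hedef
  have hee : ∀ x, e.hom (e.hom x) = e.hom x := by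
    intro x
    show i.hom (r.hom (i.hom (r.hom x))) = i.hom (r.hom x)
    rw [hri]
  have hkerinv : ∀ g : G, ∀ x ∈ LinearMap.ker (homEnd e),
      N.ρ g x ∈ LinearMap.ker (homEnd e) := by
    intro g x hx
    rw [LinearMap.mem_ker] at hx ⊢
    have h2 := hom_comm e g x
    rw [show (homEnd e) x = e.hom x from rfl] at hx
    rw [hx, map_zero] at h2
    exact h2
  have hrangeinv : ∀ g : G, ∀ x ∈ LinearMap.range (homEnd e),
      N.ρ g x ∈ LinearMap.range (homEnd e) := by
    rintro g x ⟨y, rfl⟩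
    exact ⟨N.ρ g y, hom_comm e g y⟩
  have hinf : LinearMap.ker (homEnd e) ⊓ LinearMap.range (homEnd e) = ⊥ := by
    rw [eq_bot_iff]
    intro x hx
    rw [Submodule.mem_inf] at hx
    obtain ⟨hx1, y, rfl⟩ := hx
    rw [LinearMap.mem_ker] at hx1
    rw [Submodule.mem_bot]
    exact (hee y).symm.trans hx1
  have hsup : LinearMap.ker (homEnd e) ⊔ LinearMap.range (homEnd e) = ⊤ := by
    rw [eq_top_iff]
    intro x _
    have hx : x = (x - e.hom x) + e.hom x := by abel
    rw [hx]
    refine Submodule.add_mem_sup ?_ ⟨x, rfl⟩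
    rw [LinearMap.mem_ker, homEnd_apply, map_sub, hee, sub_self]
  rcases hN.2 _ _ hkerinv hrangeinv hinf hsup with hker | hrange
  · have hinj : Function.Injective (homEnd e) := by
      rw [← LinearMap.ker_eq_bot]; exact hker
    have hid : ∀ x, e.hom x = x := fun x => hinj (hee x)
    refine ⟨isoOfBijective i ⟨fun x y hxy => by rw [← hri x, hxy, hri y], fun x => ?_⟩⟩
    exact ⟨r.hom x, hid x⟩
  · exfalso
    have he0 : ∀ x : N.V, e.hom x = 0 := by
      intro x
      have hx : e.hom x ∈ LinearMap.range (homEnd e) := ⟨x, rfl⟩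
      rw [hrange] at hx
      simpa using hx
    haveI := hM
    obtain ⟨x, hx⟩ := exists_ne (0 : M.V)
    apply hx
    have hh : i.hom x = e.hom (i.hom x) := by
      show i.hom x = i.hom (r.hom (i.hom x))
      rw [hri]
    rw [he0] at hh
    rw [← hri x, hh, map_zero]

end Fitting


section Decomp

variable {k : Type} [Field k] {G : Type} [Group G]

/-- The sub-representation on an invariant submodule. -/
noncomputable def subRep (M : Rep.{0} k G) (U : Submodule k M.V)
    (hU : ∀ g : G, ∀ x ∈ U, M.ρ g x ∈ U) : Rep.{0} k G :=
  Rep.of (X := U)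
    { toFun := fun g => (M.ρ g).restrict (fun x hx => hU g x hx)
      map_one' := by
        refine LinearMap.ext fun x => Subtype.ext ?_
        show M.ρ 1 x.1 = x.1
        rw [map_one]; rfl
      map_mul' := by
        intro g h
        refine LinearMap.ext fun x => Subtype.ext ?_
        show M.ρ (g * h) x.1 = M.ρ g (M.ρ h x.1)
        rw [map_mul]; rfl }

instance subRep_fd (M : Rep.{0} k G) [FiniteDimensional k M.V] (U : Submodule k M.V) (hU) :
    FiniteDimensional k (subRep M U hU).V := by
  show FiniteDimensional k U
  infer_instance

lemma finrank_subRep (M : Rep.{0} k G) (U : Submodule k M.V) (hU) :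
    finrank k (subRep M U hU).V = finrank k U := rfl

/-- finrank is invariant under isomorphism of representations. -/
lemma finrank_eq_of_iso {M N : Rep.{0} k G} (e : M ≅ N) : finrank k M.V = finrank k N.V :=
  LinearEquiv.finrank_eq (LinearEquiv.ofBijective (e.hom.hom : M.V →ₗ[k] N.V)
    (iso_hom_bijective e))

lemma fd_of_iso {M N : Rep.{0} k G} (e : M ≅ N) [FiniteDimensional k M.V] :
    FiniteDimensional k N.V :=
  LinearEquiv.finiteDimensional (LinearEquiv.ofBijective (e.hom.hom : M.V →ₗ[k] N.V)
    (iso_hom_bijective e))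

/-- A subsingleton representation is the empty direct sum. -/
lemma isoEmptyPi (M : Rep.{0} k G) (h : Subsingleton M.V) :
    Nonempty (M ≅ piRep (Fin.elim0 : Fin 0 → Rep.{0} k G)) := by
  haveI hss : Subsingleton ((piRep (Fin.elim0 : Fin 0 → Rep.{0} k G)).V : Type) :=
    Subsingleton.intro fun a b => funext fun j => j.elim0
  refine ⟨isoOfBijective (mkHom 0 ?_) ?_⟩
  · intro g
    refine LinearMap.ext fun x => ?_
    exact Subsingleton.elim _ _
  · exact ⟨fun a b _ => Subsingleton.elim a b, fun x => ⟨0, Subsingleton.elim _ _⟩⟩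

/-- Any representation is isomorphic to the direct sum of the singleton family. -/
noncomputable def isoSinglePi (M : Rep.{0} k G) : M ≅ piRep (fun _ : Fin 1 => M) where
  hom := mkHom (LinearMap.pi fun _ => LinearMap.id) (fun g => rfl)
  inv := piProj (fun _ : Fin 1 => M) 0
  hom_inv_id := by apply Rep.hom_ext; rfl
  inv_hom_id := by
    refine hom_ext' fun v => funext fun j => ?_
    have hj : j = 0 := Subsingleton.elim j 0
    subst hj
    rfl

section Glue

variable {ι₁ ι₂ : Type} [Fintype ι₁] [Fintype ι₂] [DecidableEq ι₁] [DecidableEq ι₂]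

/-- Glue decompositions of two complementary invariant submodules. -/
lemma glue_iso (M : Rep.{0} k G) (U V : Submodule k M.V)
    (hU : ∀ g : G, ∀ x ∈ U, M.ρ g x ∈ U) (hV : ∀ g : G, ∀ x ∈ V, M.ρ g x ∈ V)
    (hcompl : IsCompl U V)
    (σ₁ : ι₁ → Rep.{0} k G) (σ₂ : ι₂ → Rep.{0} k G)
    (e₁ : subRep M U hU ≅ piRep σ₁) (e₂ : subRep M V hV ≅ piRep σ₂) :
    Nonempty (M ≅ piRep (Sum.elim σ₁ σ₂)) := by
  classical
  let resL : (piRep (Sum.elim σ₁ σ₂)).V →ₗ[k] (piRep σ₁).V :=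
    LinearMap.pi (fun j₁ => LinearMap.proj (Sum.inl j₁ : ι₁ ⊕ ι₂))
  let resR : (piRep (Sum.elim σ₁ σ₂)).V →ₗ[k] (piRep σ₂).V :=
    LinearMap.pi (fun j₂ => LinearMap.proj (Sum.inr j₂ : ι₁ ⊕ ι₂))
  let jU : (subRep M U hU).V →ₗ[k] M.V := U.subtype
  let jV : (subRep M V hV).V →ₗ[k] M.V := V.subtype
  let Φ : (piRep (Sum.elim σ₁ σ₂)).V →ₗ[k] M.V :=
    jU ∘ₗ (e₁.inv.hom : (piRep σ₁).V →ₗ[k] (subRep M U hU).V) ∘ₗ resL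
    + jV ∘ₗ (e₂.inv.hom : (piRep σ₂).V →ₗ[k] (subRep M V hV).V) ∘ₗ resR
  have hΦ : ∀ v, Φ v = jU (e₁.inv.hom (resL v)) + jV (e₂.inv.hom (resR v)) := fun v => rfl
  have hUmem : ∀ x : (subRep M U hU).V, jU x ∈ U := fun x => (x : U).2
  have hVmem : ∀ x : (subRep M V hV).V, jV x ∈ V := fun x => (x : V).2
  have hbij : Function.Bijective Φ := by
    constructor
    · intro v w hvw
      rw [hΦ v, hΦ w] at hvw
      have h0 : jU (e₁.inv.hom (resL v)) - jU (e₁.inv.hom (resL w))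
          = jV (e₂.inv.hom (resR w)) - jV (e₂.inv.hom (resR v)) := by
        rw [sub_eq_sub_iff_add_eq_add, hvw]
        exact add_comm _ _
      have hmemU : jU (e₁.inv.hom (resL v)) - jU (e₁.inv.hom (resL w)) ∈ U :=
        U.sub_mem (hUmem _) (hUmem _)
      have hmemV : jU (e₁.inv.hom (resL v)) - jU (e₁.inv.hom (resL w)) ∈ V := by
        rw [h0]; exact V.sub_mem (hVmem _) (hVmem _)
      have hz : jU (e₁.inv.hom (resL v)) - jU (e₁.inv.hom (resL w)) = 0 := by
        have hb : jU (e₁.inv.hom (resL v)) - jU (e₁.inv.hom (resL w)) ∈ U ⊓ V :=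
          Submodule.mem_inf.mpr ⟨hmemU, hmemV⟩
        rw [hcompl.inf_eq_bot] at hb
        simpa using hb
      have hL : resL v = resL w := by
        apply (iso_inv_bijective e₁).1
        apply Subtype.ext
        show jU (e₁.inv.hom (resL v)) = jU (e₁.inv.hom (resL w))
        exact sub_eq_zero.mp hz
      have hz2 : jV (e₂.inv.hom (resR v)) = jV (e₂.inv.hom (resR w)) := by
        have h1 : jU (e₁.inv.hom (resL v)) = jU (e₁.inv.hom (resL w)) := by rw [hL]
        rw [h1] at hvw
        exact add_left_cancel hvw
      have hR : resR v = resR w := by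
        apply (iso_inv_bijective e₂).1
        apply Subtype.ext
        exact hz2
      funext j
      rcases j with j₁ | j₂
      · exact congrFun hL j₁
      · exact congrFun hR j₂
    · intro x
      have hx : x ∈ U ⊔ V := by rw [hcompl.sup_eq_top]; trivial
      obtain ⟨u, hu, w, hw, rfl⟩ := Submodule.mem_sup.mp hx
      obtain ⟨vL, hvL⟩ := (iso_inv_bijective e₁).2 ⟨u, hu⟩
      obtain ⟨vR, hvR⟩ := (iso_inv_bijective e₂).2 ⟨w, hw⟩
      refine ⟨fun j => Sum.rec (fun j₁ => vL j₁) (fun j₂ => vR j₂) j, ?_⟩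
      refine (hΦ _).trans ?_
      show jU (e₁.inv.hom vL) + jV (e₂.inv.hom vR) = u + w
      rw [hvL, hvR]
      rfl
  have hcomm : ∀ g : G, ∀ v, Φ ((piRep (Sum.elim σ₁ σ₂)).ρ g v) = M.ρ g (Φ v) := by
    intro g v
    simp only [hΦ]
    have h1 : e₁.inv.hom (resL ((piRep (Sum.elim σ₁ σ₂)).ρ g v))
        = (subRep M U hU).ρ g (e₁.inv.hom (resL v)) := by
      have hres : resL ((piRep (Sum.elim σ₁ σ₂)).ρ g v) = (piRep σ₁).ρ g (resL v) := rfl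
      rw [hres]
      exact hom_comm e₁.inv g (resL v)
    have h2 : e₂.inv.hom (resR ((piRep (Sum.elim σ₁ σ₂)).ρ g v))
        = (subRep M V hV).ρ g (e₂.inv.hom (resR v)) := by
      have hres : resR ((piRep (Sum.elim σ₁ σ₂)).ρ g v) = (piRep σ₂).ρ g (resR v) := rfl
      rw [hres]
      exact hom_comm e₂.inv g (resR v)
    rw [h1, h2, map_add]
    rfl
  exact ⟨(isoOfBijective
    (mkHom Φ (fun g => LinearMap.ext fun v => hcomm g v)) hbij).symm⟩

end Glue

/-- Every finite-dimensional representation decomposes into indecomposables. -/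
lemma exists_decomp (M : Rep.{0} k G) (hfd : FiniteDimensional k M.V) :
    ∃ (ι : Type) (_ : Fintype ι) (_ : DecidableEq ι) (σ : ι → Rep.{0} k G),
      (∀ j, (σ j).Indecomposable ∧ FiniteDimensional k (σ j).V) ∧
      Nonempty (M ≅ piRep σ) := by
  obtain ⟨N, hN⟩ : ∃ N, finrank k M.V ≤ N := ⟨_, le_refl _⟩
  induction N using Nat.strong_induction_on generalizing M with
  | _ N ih =>
    by_cases hss : Subsingleton M.V
    · exact ⟨Fin 0, inferInstance, inferInstance, Fin.elim0, fun j => j.elim0,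
        isoEmptyPi M hss⟩
    have hnt : Nontrivial M.V := not_subsingleton_iff_nontrivial.mp hss
    by_cases hin : M.Indecomposable
    · exact ⟨Fin 1, inferInstance, inferInstance, fun _ => M, fun _ => ⟨hin, hfd⟩,
        ⟨isoSinglePi M⟩⟩
    · rw [Rep.Indecomposable, not_and_or] at hin
      rcases hin with hin | hin
      · exact absurd hnt hin
      push_neg at hin
      obtain ⟨U, V, hU, hV, hinf, hsup, hUne, hVne⟩ := hin
      have hcompl : IsCompl U V := ⟨disjoint_iff.mpr hinf, codisjoint_iff.mpr hsup⟩
      have hfrk : finrank k U + finrank k V = finrank k M.V :=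
        Submodule.finrank_add_eq_of_isCompl hcompl
      have hUpos : finrank k U ≠ 0 := by
        rw [Ne, Submodule.finrank_eq_zero]; exact hUne
      have hVpos : finrank k V ≠ 0 := by
        rw [Ne, Submodule.finrank_eq_zero]; exact hVne
      have hUlt : finrank k (subRep M U hU).V < N := by
        rw [finrank_subRep]; omega
      have hVlt : finrank k (subRep M V hV).V < N := by
        rw [finrank_subRep]; omega
      obtain ⟨ι₁, hft1, hde1, σ₁, hσ₁, ⟨e₁⟩⟩ :=
        ih (finrank k (subRep M U hU).V) hUlt (subRep M U hU) inferInstance (le_refl _)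
      obtain ⟨ι₂, hft2, hde2, σ₂, hσ₂, ⟨e₂⟩⟩ :=
        ih (finrank k (subRep M V hV).V) hVlt (subRep M V hV) inferInstance (le_refl _)
      refine ⟨ι₁ ⊕ ι₂, inferInstance, inferInstance, Sum.elim σ₁ σ₂, ?_, ?_⟩
      · rintro (j₁ | j₂)
        · exact hσ₁ j₁
        · exact hσ₂ j₂
      · exact glue_iso M U V hU hV hcompl σ₁ σ₂ e₁ e₂

end Decomp

section Induction

variable {k : Type} [Field k] {Q : Type} [Group Q]

/-- Restriction of a representation to a subgroup. -/
noncomputable def res (P' : Subgroup Q) (M : Rep.{0} k Q) : Rep.{0} k ↥P' :=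
  Rep.of (X := M.V) (M.ρ.comp P'.subtype)

lemma res_ρ_apply (P' : Subgroup Q) (M : Rep.{0} k Q) (p : ↥P') (x : M.V) :
    (res P' M).ρ p x = M.ρ (p : Q) x := rfl

instance res_fd (P' : Subgroup Q) (M : Rep.{0} k Q) [FiniteDimensional k M.V] :
    FiniteDimensional k (res P' M).V := by
  show FiniteDimensional k M.V; infer_instance

lemma finrank_res (P' : Subgroup Q) (M : Rep.{0} k Q) :
    finrank k (res P' M).V = finrank k M.V := rfl

variable (P' : Subgroup Q)

/-- The 1-cocycle associated to a choice of coset representatives. -/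
noncomputable def cocS (g : Q) (y : Q ⧸ P') : ↥P' :=
  ⟨(g • y).out⁻¹ * g * y.out, by
    have h1 : QuotientGroup.mk ((g • y).out) = g • y := QuotientGroup.out_eq' _
    have h2 : g • y = QuotientGroup.mk (g * y.out) := by
      conv_lhs => rw [← QuotientGroup.out_eq' y]
      rw [MulAction.Quotient.smul_mk]
      rfl
    have h3 := (QuotientGroup.eq).mp (h1.trans h2)
    rwa [← mul_assoc] at h3⟩

lemma cocS_coe (g : Q) (y : Q ⧸ P') : (cocS P' g y : Q) = (g • y).out⁻¹ * g * y.out := rfl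

lemma cocS_one (y : Q ⧸ P') : cocS P' 1 y = 1 := by
  apply Subtype.ext
  rw [cocS_coe, one_smul, OneMemClass.coe_one]
  group

lemma cocS_mul (g h : Q) (x : Q ⧸ P') :
    cocS P' (g * h) x = cocS P' g (h • x) * cocS P' h x := by
  apply Subtype.ext
  show _ = (cocS P' g (h • x) : Q) * (cocS P' h x : Q)
  rw [cocS_coe, cocS_coe, cocS_coe, mul_smul]
  group

lemma cocS_key (g : Q) (y : Q ⧸ P') :
    y.out * (cocS P' g (g⁻¹ • y) : Q) = g * (g⁻¹ • y).out := by
  rw [cocS_coe]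
  rw [smul_inv_smul]
  group

lemma cocS_key' (g : Q) (y : Q ⧸ P') :
    (cocS P' g (g⁻¹ • y) : Q) * (g⁻¹ • y).out⁻¹ = y.out⁻¹ * g := by
  rw [cocS_coe, smul_inv_smul]
  group

/-- The induced representation, modeled on functions `Q ⧸ P' → L`. -/
noncomputable def ind (L : Rep.{0} k ↥P') : Rep.{0} k Q :=
  Rep.of (X := (Q ⧸ P') → (L.V : Type))
    { toFun := fun g =>
        LinearMap.pi (fun y => (L.ρ (cocS P' g (g⁻¹ • y))) ∘ₗ LinearMap.proj (g⁻¹ • y))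
      map_one' := by
        refine LinearMap.ext fun v => funext fun y => ?_
        show L.ρ (cocS P' 1 (1⁻¹ • y)) (v (1⁻¹ • y)) = v y
        simp [cocS_one]
      map_mul' := by
        intro g h
        refine LinearMap.ext fun v => funext fun y => ?_
        show L.ρ (cocS P' (g * h) ((g * h)⁻¹ • y)) (v ((g * h)⁻¹ • y))
          = L.ρ (cocS P' g (g⁻¹ • y)) (L.ρ (cocS P' h (h⁻¹ • (g⁻¹ • y))) (v (h⁻¹ • (g⁻¹ • y))))
        have hx : (g * h)⁻¹ • y = h⁻¹ • (g⁻¹ • y) := by rw [mul_inv_rev, mul_smul]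
        have hc : cocS P' (g * h) (h⁻¹ • (g⁻¹ • y))
            = cocS P' g (g⁻¹ • y) * cocS P' h (h⁻¹ • (g⁻¹ • y)) := by
          rw [cocS_mul P' g h (h⁻¹ • (g⁻¹ • y)), smul_inv_smul]
        rw [hx, hc, map_mul]
        rfl }

lemma ind_ρ_apply (L : Rep.{0} k ↥P') (g : Q) (v : (Q ⧸ P') → (L.V : Type)) (y : Q ⧸ P') :
    ((ind P' L).ρ g v) y = L.ρ (cocS P' g (g⁻¹ • y)) (v (g⁻¹ • y)) := rfl

instance ind_fd (L : Rep.{0} k ↥P') [Finite (Q ⧸ P')] [FiniteDimensional k L.V] :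
    FiniteDimensional k (ind P' L).V := by
  show FiniteDimensional k ((Q ⧸ P') → (L.V : Type))
  infer_instance

lemma finrank_ind (L : Rep.{0} k ↥P') [Fintype (Q ⧸ P')] [FiniteDimensional k L.V] :
    finrank k (ind P' L).V = Fintype.card (Q ⧸ P') * finrank k L.V := by
  show finrank k ((Q ⧸ P') → (L.V : Type)) = _
  rw [Module.finrank_pi_fintype, Finset.sum_const, Finset.card_univ, smul_eq_mul]

/-- Functoriality of induction. -/
noncomputable def indMap {L L' : Rep.{0} k ↥P'} (φ : L ⟶ L') : ind P' L ⟶ ind P' L' :=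
  mkHom (LinearMap.pi (fun y => (φ.hom : L.V →ₗ[k] L'.V) ∘ₗ LinearMap.proj y)) (by
    have key : ∀ g : Q, ∀ v : ((Q ⧸ P') → (L.V : Type)), ∀ y : Q ⧸ P',
        (LinearMap.pi (fun y => (φ.hom : L.V →ₗ[k] L'.V) ∘ₗ LinearMap.proj y))
          ((ind P' L).ρ g v) y
        = ((ind P' L').ρ g ((LinearMap.pi (fun y =>
            (φ.hom : L.V →ₗ[k] L'.V) ∘ₗ LinearMap.proj y)) v)) y := by
      intro g v y
      show φ.hom (L.ρ (cocS P' g (g⁻¹ • y)) (v (g⁻¹ • y)))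
        = L'.ρ (cocS P' g (g⁻¹ • y)) (φ.hom (v (g⁻¹ • y)))
      exact hom_comm φ _ _
    exact fun g => LinearMap.ext fun v => funext fun y => key g v y)

/-- Induction preserves isomorphism. -/
noncomputable def indIso {L L' : Rep.{0} k ↥P'} (e : L ≅ L') : ind P' L ≅ ind P' L' where
  hom := indMap P' e.hom
  inv := indMap P' e.inv
  hom_inv_id := by
    refine hom_ext' fun v => funext fun y => ?_
    exact (inv_of_homInv e).1 (v y)
  inv_hom_id := by
    refine hom_ext' fun v => funext fun y => ?_
    exact (inv_of_homInv e).2 (v y)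

/-- Induction commutes with finite direct sums. -/
noncomputable def indPiIso {ι : Type} [Fintype ι] [DecidableEq ι] (σ : ι → Rep.{0} k ↥P') :
    ind P' (piRep σ) ≅ piRep (fun j => ind P' (σ j)) where
  hom := mkHom (LinearMap.pi (fun j => LinearMap.pi (fun y =>
            (LinearMap.proj j : (∀ i, ((σ i).V : Type)) →ₗ[k] (σ j).V) ∘ₗ
              (LinearMap.proj y : ((Q ⧸ P') → (∀ i, ((σ i).V : Type))) →ₗ[k] _))))
           (fun g => rfl)
  inv := mkHom (LinearMap.pi (fun y => LinearMap.pi (fun j =>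
            (LinearMap.proj y : ((Q ⧸ P') → ((σ j).V : Type)) →ₗ[k] (σ j).V) ∘ₗ
              (LinearMap.proj j : (∀ i, ((Q ⧸ P') → ((σ i).V : Type))) →ₗ[k] _))))
           (fun g => rfl)
  hom_inv_id := by apply Rep.hom_ext; rfl
  inv_hom_id := by apply Rep.hom_ext; rfl

/-- Relative projectivity: if the index of `P'` is invertible in `k`, every representation
is a direct summand of the representation induced from its restriction. -/
lemma summand_ind_res (M : Rep.{0} k Q) [Fintype (Q ⧸ P')]
    (ht : (Fintype.card (Q ⧸ P') : k) ≠ 0) :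
    Summand M (ind P' (res P' M)) := by
  classical
  set c : k := (Fintype.card (Q ⧸ P') : k) with hc
  let sec : M.V →ₗ[k] ((Q ⧸ P') → (M.V : Type)) :=
    LinearMap.pi (fun y => c⁻¹ • (M.ρ ((Quotient.out y)⁻¹ : Q) : M.V →ₗ[k] M.V))
  let ret : ((Q ⧸ P') → (M.V : Type)) →ₗ[k] M.V :=
    ∑ y : Q ⧸ P', (M.ρ (Quotient.out y) : M.V →ₗ[k] M.V) ∘ₗ LinearMap.proj y
  have hsec : ∀ (m : M.V) (y : Q ⧸ P'), sec m y = c⁻¹ • M.ρ ((Quotient.out y)⁻¹) m :=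
    fun m y => rfl
  have hret : ∀ v : ((Q ⧸ P') → (M.V : Type)),
      ret v = ∑ y : Q ⧸ P', M.ρ (Quotient.out y) (v y) := by
    intro v
    show (∑ y : Q ⧸ P', (M.ρ (Quotient.out y) : M.V →ₗ[k] M.V) ∘ₗ LinearMap.proj y) v = _
    rw [LinearMap.sum_apply]
    rfl
  have keysec : ∀ g : Q, ∀ m : M.V,
      (ind P' (res P' M)).ρ g (sec m) = sec (M.ρ g m) := by
    intro g m
    funext y
    refine (ind_ρ_apply P' (res P' M) g (sec m) y).trans ?_
    rw [hsec, hsec]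
    show (res P' M).ρ (cocS P' g (g⁻¹ • y)) (c⁻¹ • M.ρ ((g⁻¹ • y).out⁻¹) m) = _
    show M.ρ ((cocS P' g (g⁻¹ • y) : Q)) (c⁻¹ • M.ρ ((g⁻¹ • y).out⁻¹) m) = _
    rw [map_smul]
    congr 1
    have h1 : M.ρ ((cocS P' g (g⁻¹ • y) : Q)) (M.ρ ((g⁻¹ • y).out⁻¹) m)
        = M.ρ ((cocS P' g (g⁻¹ • y) : Q) * (g⁻¹ • y).out⁻¹) m := by
      rw [map_mul]; rfl
    have h2 : M.ρ (y.out⁻¹) (M.ρ g m) = M.ρ (y.out⁻¹ * g) m := by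
      rw [map_mul]; rfl
    rw [h1, h2, cocS_key']
  have keyret : ∀ g : Q, ∀ v : ((Q ⧸ P') → (M.V : Type)),
      ret ((ind P' (res P' M)).ρ g v) = M.ρ g (ret v) := by
    intro g v
    rw [hret ((ind P' (res P' M)).ρ g v), hret, map_sum]
    rw [← Equiv.sum_comp (MulAction.toPerm g⁻¹ : Equiv.Perm (Q ⧸ P'))
      (fun y => M.ρ g (M.ρ (Quotient.out y) (v y)))]
    refine Finset.sum_congr rfl fun y _ => ?_
    have hy : (MulAction.toPerm g⁻¹ : Equiv.Perm (Q ⧸ P')) y = g⁻¹ • y := rfl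
    rw [hy, ind_ρ_apply P' (res P' M) g v, res_ρ_apply]
    have h1 : M.ρ (Quotient.out y) (M.ρ ((cocS P' g (g⁻¹ • y) : Q)) (v (g⁻¹ • y)))
        = M.ρ (Quotient.out y * (cocS P' g (g⁻¹ • y) : Q)) (v (g⁻¹ • y)) := by
      rw [map_mul]; rfl
    have h2 : M.ρ g (M.ρ (Quotient.out (g⁻¹ • y)) (v (g⁻¹ • y)))
        = M.ρ (g * Quotient.out (g⁻¹ • y)) (v (g⁻¹ • y)) := by
      rw [map_mul]; rfl
    rw [h1, h2, cocS_key]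
  refine ⟨mkHom sec (fun g => LinearMap.ext fun m => (keysec g m).symm),
    mkHom ret (fun g => LinearMap.ext fun v => keyret g v), ?_⟩
  refine hom_ext' fun m => ?_
  show ret (sec m) = m
  rw [hret]
  have h1 : ∀ y : Q ⧸ P', M.ρ (Quotient.out y) (sec m y) = c⁻¹ • m := by
    intro y
    rw [hsec, map_smul]
    congr 1
    have h2 : M.ρ (Quotient.out y) (M.ρ ((Quotient.out y)⁻¹) m)
        = M.ρ (Quotient.out y * (Quotient.out y)⁻¹) m := by rw [map_mul]; rfl
    rw [h2, mul_inv_cancel, map_one]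
    rfl
  rw [Finset.sum_congr rfl (fun y _ => h1 y), Finset.sum_const, Finset.card_univ]
  rw [← Nat.cast_smul_eq_nsmul k, smul_smul, ← hc, mul_inv_cancel₀ ht, one_smul]

end Induction

section Assembly

variable {k : Type} [Field k] {G : Type} [Group G]

/-- From a decomposition of `J`, extract a short list of candidate `d`-dimensional
indecomposable summands. -/
lemma summands_list (J : Rep.{0} k G) (hfd : FiniteDimensional k J.V) (d t' : ℕ) (hd : 1 ≤ d)
    (hdim : finrank k J.V ≤ t' * d) :
    ∃ L : List (Rep.{0} k G), L.length ≤ t' ∧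
      ∀ M : Rep.{0} k G, FiniteDimensional k M.V → M.Indecomposable →
        finrank k M.V = d → Summand M J → ∃ N ∈ L, Nonempty (M ≅ N) := by
  classical
  obtain ⟨ι, ft, de, τ, hτ, ⟨e⟩⟩ := exists_decomp J hfd
  haveI := ft; haveI := de
  haveI : ∀ j, FiniteDimensional k (τ j).V := fun j => (hτ j).2
  refine ⟨((Finset.univ.filter (fun j => finrank k (τ j).V = d)).toList).map τ, ?_, ?_⟩
  · have hsum : ∑ j, finrank k (τ j).V = finrank k J.V := by
      rw [← finrank_piRep τ]
      exact (finrank_eq_of_iso e).symm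
    have hfil : (Finset.univ.filter (fun j => finrank k (τ j).V = d)).card * d
        ≤ finrank k J.V := by
      rw [← hsum]
      calc (Finset.univ.filter (fun j => finrank k (τ j).V = d)).card * d
          = ∑ j ∈ Finset.univ.filter (fun j => finrank k (τ j).V = d), finrank k (τ j).V := by
            rw [Finset.sum_congr rfl (fun j hj => (Finset.mem_filter.mp hj).2),
              Finset.sum_const, smul_eq_mul]
        _ ≤ ∑ j, finrank k (τ j).V :=
            Finset.sum_le_sum_of_subset (Finset.filter_subset _ _)
    rw [List.length_map, Finset.length_toList]
    exact Nat.le_of_mul_le_mul_right (hfil.trans hdim) (by omega)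
  · intro M hMfd hMind hMrank hMsum
    have hpi : Summand M (piRep τ) := hMsum.of_iso_right e
    haveI := hMfd
    obtain ⟨j, hj⟩ := exchange hMind τ hpi
    obtain ⟨eM⟩ := iso_of_summand (hτ j).1 hMind.1 hj
    refine ⟨τ j, ?_, ⟨eM⟩⟩
    refine List.mem_map.mpr ⟨j, ?_, rfl⟩
    rw [Finset.mem_toList, Finset.mem_filter]
    exact ⟨Finset.mem_univ j, by rw [← finrank_eq_of_iso eM, hMrank]⟩

/-- A covering list of length at most `N` yields `CoversIndec`. -/
lemma coversIndec_of_list (d N : ℕ) (L : List (Rep.{0} k G)) (hlen : L.length ≤ N)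
    (hcov : ∀ M : Rep.{0} k G, FiniteDimensional k M.V → M.Indecomposable →
      finrank k M.V = d → ∃ N' ∈ L, Nonempty (M ≅ N')) :
    CoversIndec k G d N := by
  refine ⟨fun i => L.getD i (Rep.trivial k G k), fun M h1 h2 h3 => ?_⟩
  obtain ⟨N', hmem, hiso⟩ := hcov M h1 h2 h3
  obtain ⟨idx, hidx, hget⟩ := List.mem_iff_getElem.mp hmem
  refine ⟨⟨idx, lt_of_lt_of_le hidx hlen⟩, ?_⟩
  have : L.getD idx (Rep.trivial k G k) = N' := by
    rw [List.getD_eq_getElem L _ hidx, hget]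
  simp only [this]
  exact hiso

end Assembly

end RepAux

open RepAux in
theorem coversIndec_of_sylow
    (p : ℕ) [Fact p.Prime] (Q : Type) [Group Q] [Fintype Q]
    (P : Sylow p Q) (t d : ℕ) (ht : t = (P : Subgroup Q).index) (hd : 1 ≤ d)
    (n : ℕ → ℕ)
    (hP : ∀ d', (d + t - 1) / t ≤ d' → d' ≤ d →
      CoversIndec (ZMod p) ↥(P : Subgroup Q) d' (n d')) :
    CoversIndec (ZMod p) Q d (t * ∑ d' ∈ Finset.Icc ((d + t - 1) / t) d, n d') := by
  classical
  set P' : Subgroup Q := (P : Subgroup Q) with hP'def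
  haveI : Fintype (Q ⧸ P') := Fintype.ofFinite _
  set lo := (d + t - 1) / t with hlo
  have hcard : Fintype.card (Q ⧸ P') = t := by
    rw [ht, Subgroup.index, Nat.card_eq_fintype_card]
  have htpos : 0 < t := by
    rw [ht]; exact Nat.pos_of_ne_zero Subgroup.index_ne_zero_of_finite
  have hpt : ¬ (p ∣ t) := by
    rw [ht]; exact P.not_dvd_index
  have htk : (Fintype.card (Q ⧸ P') : ZMod p) ≠ 0 := by
    rw [hcard]
    intro h
    exact hpt ((ZMod.natCast_eq_zero_iff t p).mp h)
  -- chosen covering families of indecomposable representations of `P'`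
  let F : ∀ d', Fin (n d') → Rep.{0} (ZMod p) ↥P' := fun d' =>
    if h : lo ≤ d' ∧ d' ≤ d then (hP d' h.1 h.2).choose
    else fun _ => Rep.trivial (ZMod p) ↥P' (ZMod p)
  have hF : ∀ d', lo ≤ d' → d' ≤ d → ∀ M : Rep.{0} (ZMod p) ↥P',
      FiniteDimensional (ZMod p) M.V → M.Indecomposable →
      finrank (ZMod p) M.V = d' → ∃ i, Nonempty (M ≅ F d' i) := by
    intro d' h1 h2 M hfd hind hrank
    have hFd : F d' = (hP d' h1 h2).choose := by
      simp only [F, dif_pos (And.intro h1 h2)]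
    rw [hFd]
    exact (hP d' h1 h2).choose_spec M hfd hind hrank
  -- sanitized families: finite-dimensional of dimension at most `d`
  let F' : ∀ d', Fin (n d') → Rep.{0} (ZMod p) ↥P' := fun d' i =>
    if FiniteDimensional (ZMod p) ((F d' i).V : Type) ∧
        finrank (ZMod p) ((F d' i).V : Type) ≤ d
    then F d' i else Rep.trivial (ZMod p) ↥P' (ZMod p)
  have hF'fd : ∀ d' i, FiniteDimensional (ZMod p) ((F' d' i).V : Type) := by
    intro d' i
    by_cases h : FiniteDimensional (ZMod p) ((F d' i).V : Type) ∧
        finrank (ZMod p) ((F d' i).V : Type) ≤ d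
    · rw [show F' d' i = F d' i by simp only [F']; rw [if_pos h]]; exact h.1
    · rw [show F' d' i = Rep.trivial (ZMod p) ↥P' (ZMod p) by simp only [F']; rw [if_neg h]]
      show FiniteDimensional (ZMod p) (ZMod p)
      infer_instance
  have hF'le : ∀ d' i, finrank (ZMod p) ((F' d' i).V : Type) ≤ d := by
    intro d' i
    by_cases h : FiniteDimensional (ZMod p) ((F d' i).V : Type) ∧
        finrank (ZMod p) ((F d' i).V : Type) ≤ d
    · rw [show F' d' i = F d' i by simp only [F']; rw [if_pos h]]; exact h.2
    · rw [show F' d' i = Rep.trivial (ZMod p) ↥P' (ZMod p) by simp only [F']; rw [if_neg h]]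
      show finrank (ZMod p) (ZMod p) ≤ d
      rw [finrank_self]; exact hd
  have hF' : ∀ d', lo ≤ d' → d' ≤ d → ∀ M : Rep.{0} (ZMod p) ↥P',
      FiniteDimensional (ZMod p) M.V → M.Indecomposable →
      finrank (ZMod p) M.V = d' → ∃ i, Nonempty (M ≅ F' d' i) := by
    intro d' h1 h2 M hfd hind hrank
    obtain ⟨i, ⟨e⟩⟩ := hF d' h1 h2 M hfd hind hrank
    haveI := hfd
    have hcond : FiniteDimensional (ZMod p) ((F d' i).V : Type) ∧
        finrank (ZMod p) ((F d' i).V : Type) ≤ d :=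
      ⟨fd_of_iso e, by rw [← finrank_eq_of_iso e, hrank]; exact h2⟩
    have heq : F' d' i = F d' i := by simp only [F']; rw [if_pos hcond]
    exact ⟨i, by rw [heq]; exact ⟨e⟩⟩
  -- summand lists for the induced representations
  have hSLex : ∀ d' (i : Fin (n d')), ∃ L : List (Rep.{0} (ZMod p) Q), L.length ≤ t ∧
      ∀ M : Rep.{0} (ZMod p) Q, FiniteDimensional (ZMod p) M.V → M.Indecomposable →
        finrank (ZMod p) M.V = d → Summand M (ind P' (F' d' i)) →
        ∃ N ∈ L, Nonempty (M ≅ N) := by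
    intro d' i
    haveI := hF'fd d' i
    refine summands_list (ind P' (F' d' i)) inferInstance d t hd ?_
    rw [finrank_ind, hcard]
    exact Nat.mul_le_mul_left t (hF'le d' i)
  choose SL hSLlen hSLcov using hSLex
  let BigL : List (Rep.{0} (ZMod p) Q) :=
    (Finset.Icc lo d).toList.flatMap
      (fun d' => (List.finRange (n d')).flatMap (fun i => SL d' i))
  apply coversIndec_of_list d _ BigL
  · -- length bound
    have h1 : BigL.length = ((Finset.Icc lo d).toList.map
        (fun d' => ((List.finRange (n d')).flatMap (fun i => SL d' i)).length)).sum := by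
      rw [List.length_flatMap]
    have h2 : ∀ d', ((List.finRange (n d')).flatMap (fun i => SL d' i)).length
        ≤ n d' * t := by
      intro d'
      rw [List.length_flatMap]
      have h3 : ((List.finRange (n d')).map (fun i => (SL d' i).length)).sum
          ≤ ((List.finRange (n d')).map (fun i => (SL d' i).length)).length • t := by
        apply List.sum_le_card_nsmul
        intro x hx
        obtain ⟨i, _, rfl⟩ := List.mem_map.mp hx
        exact hSLlen d' i
      rw [List.length_map, List.length_finRange, smul_eq_mul] at h3
      exact h3
    rw [h1]
    calc ((Finset.Icc lo d).toList.map
        (fun d' => ((List.finRange (n d')).flatMap (fun i => SL d' i)).length)).sum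
        ≤ ((Finset.Icc lo d).toList.map (fun d' => n d' * t)).sum := by
          apply List.sum_le_sum
          intro d' _
          exact h2 d'
      _ = ∑ d' ∈ Finset.Icc lo d, n d' * t := Finset.sum_map_toList _ _
      _ = t * ∑ d' ∈ Finset.Icc lo d, n d' := by
          rw [← Finset.sum_mul, mul_comm]
  · -- coverage
    intro M h1 h2 h3
    haveI := h1
    have hsummand : Summand M (ind P' (res P' M)) := summand_ind_res P' M htk
    obtain ⟨ι, ft, de, σ, hσ, ⟨eres⟩⟩ := exists_decomp (res P' M) inferInstance
    haveI := ft; haveI := de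
    haveI : ∀ j, FiniteDimensional (ZMod p) ((σ j).V : Type) := fun j => (hσ j).2
    have hstep : Summand M (piRep (fun j => ind P' (σ j))) :=
      hsummand.of_iso_right ((indIso P' eres).trans (indPiIso P' σ))
    obtain ⟨j, hj⟩ := exchange h2 _ hstep
    set dj := finrank (ZMod p) ((σ j).V : Type) with hdj
    have hdj_le : dj ≤ d := by
      have h4 : Summand (σ j) (res P' M) := (summand_piRep σ j).of_iso_right eres.symm
      have h5 := h4.finrank_le
      rw [finrank_res, h3] at h5
      exact h5
    have hd_le : d ≤ t * dj := by
      have h5 := hj.finrank_le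
      rw [finrank_ind, hcard, h3] at h5
      exact h5
    have hlo_le : lo ≤ dj := by
      rw [hlo, Nat.div_le_iff_le_mul_add_pred htpos]
      omega
    obtain ⟨i, ⟨ei⟩⟩ := hF' dj hlo_le hdj_le (σ j) ((hσ j).2) ((hσ j).1) rfl
    have hjsum : Summand M (ind P' (F' dj i)) := hj.of_iso_right (indIso P' ei)
    obtain ⟨N', hN'mem, hiso⟩ := hSLcov dj i M h1 h2 h3 hjsum
    refine ⟨N', ?_, hiso⟩
    apply List.mem_flatMap.mpr
    exact ⟨dj, Finset.mem_toList.mpr (Finset.mem_Icc.mpr ⟨hlo_le, hdj_le⟩),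
      List.mem_flatMap.mpr ⟨i, List.mem_finRange i, hN'mem⟩⟩
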